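/- For every symmetric nonnegative matrix A, st₊(A) ≤ 2·rk₊(A). -/

import Mathlib

open Matrix

noncomputable def sntRank {m : Type*} [Fintype m] (A : Matrix m m ℝ) : ℕ :=
  sInf {k : ℕ | ∃ B : Matrix m (Fin k) ℝ, ∃ C : Matrix (Fin k) (Fin k) ℝ,
    (∀ i j, 0 ≤ B i j) ∧ (∀ i j, 0 ≤ C i j) ∧ C.IsSymm ∧ A = B * C * Bᵀ}


noncomputable def nnRank {m n : Type*} [Fintype m] [Fintype n] (A : Matrix m n ℝ) : ℕ :=
  sInf {k : ℕ | ∃ U : Matrix m (Fin k) ℝ, ∃ V : Matrix n (Fin k) ℝ,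
    (∀ i j, 0 ≤ U i j) ∧ (∀ i j, 0 ≤ V i j) ∧ A = U * Vᵀ}

theorem stmt_9 {n : ℕ} (A : Matrix (Fin n) (Fin n) ℝ)
    (hA : A.IsSymm) (hApos : ∀ i j, 0 ≤ A i j) :
    sntRank A ≤ 2 * nnRank A := by
  have hne : {k : ℕ | ∃ U : Matrix (Fin n) (Fin k) ℝ, ∃ V : Matrix (Fin n) (Fin k) ℝ,
      (∀ i j, 0 ≤ U i j) ∧ (∀ i j, 0 ≤ V i j) ∧ A = U * Vᵀ}.Nonempty := by
    refine ⟨n, A, 1, hApos, ?_, by simp⟩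
    intro i j
    simp only [Matrix.one_apply]
    positivity
  set k := nnRank A with hk
  obtain ⟨U, V, hU, hV, hUV⟩ : k ∈ {k : ℕ | ∃ U : Matrix (Fin n) (Fin k) ℝ,
      ∃ V : Matrix (Fin n) (Fin k) ℝ,
      (∀ i j, 0 ≤ U i j) ∧ (∀ i j, 0 ≤ V i j) ∧ A = U * Vᵀ} := Nat.sInf_mem hne
  -- build the 2k factorization
  have := Nat.sInf_le (s := {k : ℕ | ∃ B : Matrix (Fin n) (Fin k) ℝ,
      ∃ C : Matrix (Fin k) (Fin k) ℝ,
      (∀ i j, 0 ≤ B i j) ∧ (∀ i j, 0 ≤ C i j) ∧ C.IsSymm ∧ A = B * C * Bᵀ}) (m := 2 * k)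
  apply this
  set e : Fin (2 * k) ≃ (Fin k ⊕ Fin k) :=
    (finCongr (two_mul k)).trans finSumFinEquiv.symm with he
  set B₀ : Matrix (Fin n) (Fin k ⊕ Fin k) ℝ := Matrix.fromCols U V with hB₀
  set C₀ : Matrix (Fin k ⊕ Fin k) (Fin k ⊕ Fin k) ℝ :=
    Matrix.fromBlocks 0 ((1/2 : ℝ) • 1) ((1/2 : ℝ) • 1) 0 with hC₀
  refine ⟨B₀.submatrix id e, C₀.submatrix e e, ?_, ?_, ?_, ?_⟩
  · intro i j
    rcases h : e j with a | a <;> simp [hB₀, Matrix.submatrix_apply, h,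
      Matrix.fromCols_apply_inl, Matrix.fromCols_apply_inr, hU, hV]
  · intro i j
    rcases h : e i with a | a <;> rcases h' : e j with b | b <;>
      simp [hC₀, Matrix.submatrix_apply, h, h', Matrix.fromBlocks_apply₁₁,
        Matrix.one_apply] <;> positivity
  · rw [Matrix.IsSymm]
    ext i j
    rcases h : e i with a | a <;> rcases h' : e j with b | b <;>
      simp [hC₀, Matrix.transpose_apply, Matrix.submatrix_apply, h, h',
        Matrix.one_apply_eq, Matrix.one_apply, eq_comm]
  · have h2 : V * Uᵀ = A := by
      have h3 := congrArg Matrix.transpose hUV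
      rw [Matrix.transpose_mul, Matrix.transpose_transpose] at h3
      exact h3.symm.trans hA
    have key : B₀ * (C₀ * B₀ᵀ) = A := by
      rw [hB₀, hC₀, Matrix.transpose_fromCols,
        Matrix.fromBlocks_mul_fromRows, Matrix.fromCols_mul_fromRows]
      simp only [Matrix.zero_mul, zero_add, add_zero, Matrix.smul_mul,
        Matrix.one_mul]
      simp only [Matrix.mul_smul]
      rw [h2, ← hUV]
      module
    have hBT : (B₀.submatrix id e)ᵀ = B₀ᵀ.submatrix e id := by
      ext i j; simp [Matrix.submatrix_apply]
    rw [hBT, Matrix.submatrix_mul_equiv, Matrix.submatrix_mul_equiv,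
      Matrix.mul_assoc, key, Matrix.submatrix_id_id]
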